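/- Let n be even, m ≥ 1, let F, F' : 𝔽₂ⁿ → 𝔽₂ᵐ be extended-affine equivalent bent functions, and let G : 𝔽₂ⁿ → 𝔽₂^{m+1} be a bent function. Then the sets { f : 𝔽₂ⁿ → 𝔽₂ | f is affine-free and (F,f) is extended-affine equivalent to G } and { f : 𝔽₂ⁿ → 𝔽₂ | f is affine-free and (F',f) is extended-affine equivalent to G } have the same cardinality. -/
import Mathlib


open Finset Function

/-- The vector space `𝔽₂ⁿ`. -/
abbrev BV (n : ℕ) := Fin n → ZMod 2

/-- The standard dot product `⟨u,v⟩ = Σᵢ uᵢ vᵢ` on `𝔽₂ⁿ`. -/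
def bdot {n : ℕ} (u v : BV n) : ZMod 2 := ∑ i, u i * v i

/-- The Walsh coefficient `W_F(a,b) = Σ_x (−1)^{⟨b,F(x)⟩ ⊕ ⟨a,x⟩}` of an `(n,m)`-function. -/
def walsh {n m : ℕ} (F : BV n → BV m) (a : BV n) (b : BV m) : ℤ :=
  ∑ x : BV n, (-1 : ℤ) ^ ((bdot b (F x) + bdot a x).val)

/-- An `(n,m)`-function is bent if all Walsh coefficients `W_F(a,b)`, `b ≠ 0`, equal `±2^{n/2}`. -/
def IsBent {n m : ℕ} (F : BV n → BV m) : Prop :=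
  ∀ (a : BV n) (b : BV m), b ≠ 0 →
    walsh F a b = 2 ^ (n / 2) ∨ walsh F a b = -2 ^ (n / 2)

/-- A map `𝔽₂ⁿ → 𝔽₂ᵐ` is affine if it is a linear map followed by a translation. -/
def IsAffineF {n m : ℕ} (A : BV n → BV m) : Prop :=
  ∃ (L : BV n →ₗ[ZMod 2] BV m) (t : BV m), ∀ x, A x = L x + t

/-- Extended-affine equivalence of `(n,m)`-functions: `F = A₁ ∘ F' ∘ A₂ + A₃` with `A₁`
a linear automorphism of `𝔽₂ᵐ`, `A₂` an affine automorphism of `𝔽₂ⁿ`, `A₃` affine. -/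
def EAequiv {n m : ℕ} (F F' : BV n → BV m) : Prop :=
  ∃ (A₁ : BV m →ₗ[ZMod 2] BV m) (A₂ : BV n → BV n) (A₃ : BV n → BV m),
    Bijective A₁ ∧ IsAffineF A₂ ∧ Bijective A₂ ∧ IsAffineF A₃ ∧
    ∀ x, F x = A₁ (F' (A₂ x)) + A₃ x

/-- The extension of an `(n,m)`-function `F` by a Boolean function `f`:
`x ↦ (F(x), f(x)) : 𝔽₂ⁿ → 𝔽₂^{m+1}`. -/
def extendF {n m : ℕ} (F : BV n → BV m) (f : BV n → ZMod 2) : BV n → BV (m + 1) :=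
  fun x => Fin.snoc (F x) (f x)

/-- A Boolean function is affine-free (no constant or degree-one terms in its ANF) iff
`f(0) = 0` and `f(eᵢ) = 0` for all standard basis vectors `eᵢ`. -/
def AffineFree {n : ℕ} (f : BV n → ZMod 2) : Prop :=
  f 0 = 0 ∧ ∀ i : Fin n, f (Pi.single i 1) = 0

section Aux

lemma zm2_add_self {M : Type*} [AddCommMonoid M] [Module (ZMod 2) M] (a : M) : a + a = 0 := by
  have h : ((2 : ZMod 2)) • a = a + a := two_smul _ a
  rw [show (2 : ZMod 2) = 0 from rfl, zero_smul] at h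
  exact h.symm

lemma zm2_addK {M : Type*} [AddCommMonoid M] [Module (ZMod 2) M] (a b : M) : a + b + b = a := by
  rw [add_assoc, zm2_add_self, add_zero]

/-- Affine scalar-valued function `𝔽₂ⁿ → 𝔽₂`. -/
def AffineScalar {n : ℕ} (ℓ : BV n → ZMod 2) : Prop :=
  ∃ (L : BV n →ₗ[ZMod 2] ZMod 2) (t : ZMod 2), ∀ x, ℓ x = L x + t

lemma IsAffineF.comp {n k m : ℕ} {A : BV k → BV m} {B : BV n → BV k}
    (hA : IsAffineF A) (hB : IsAffineF B) : IsAffineF (fun x => A (B x)) := by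
  obtain ⟨L₁, t₁, h₁⟩ := hA
  obtain ⟨L₂, t₂, h₂⟩ := hB
  exact ⟨L₁ ∘ₗ L₂, L₁ t₂ + t₁, fun x => by simp [h₁, h₂, map_add, add_assoc]⟩

lemma IsAffineF.add {n m : ℕ} {A B : BV n → BV m} (hA : IsAffineF A) (hB : IsAffineF B) :
    IsAffineF (fun x => A x + B x) := by
  obtain ⟨L₁, t₁, h₁⟩ := hA
  obtain ⟨L₂, t₂, h₂⟩ := hB
  refine ⟨L₁ + L₂, t₁ + t₂, fun x => ?_⟩
  simp only [h₁, h₂, LinearMap.add_apply]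
  abel

lemma linear_isAffineF {n m : ℕ} (L : BV n →ₗ[ZMod 2] BV m) : IsAffineF (fun x => L x) :=
  ⟨L, 0, fun x => by simp⟩

/-- Inverse of a bijective affine map is affine & bijective. -/
lemma affine_inv {n : ℕ} {A : BV n → BV n} (hA : IsAffineF A) (hbij : Function.Bijective A) :
    ∃ B : BV n → BV n, IsAffineF B ∧ Function.Bijective B ∧
      (∀ x, B (A x) = x) ∧ (∀ y, A (B y) = y) := by
  obtain ⟨L, t, hL⟩ := hA
  have hLbij : Function.Bijective L := by
    constructor
    · intro x y hxy
      apply hbij.1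
      rw [hL, hL, hxy]
    · intro y
      obtain ⟨x, hx⟩ := hbij.2 (y + t)
      refine ⟨x, ?_⟩
      have h1 : L x + t = y + t := by rw [← hL, hx]
      calc L x = L x + t + t := (zm2_addK _ t).symm
        _ = y + t + t := by rw [h1]
        _ = y := zm2_addK _ t
  let e := LinearEquiv.ofBijective L hLbij
  have heL : ∀ x, e x = L x := fun _ => rfl
  refine ⟨fun y => e.symm (y + t), ⟨e.symm.toLinearMap, e.symm t, fun y => by
      show e.symm (y + t) = e.symm y + e.symm t; rw [← map_add]⟩, ?_, fun x => ?_, fun y => ?_⟩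
  · refine ⟨fun a b hab => ?_, fun y => ⟨e y + t, by
      show e.symm (e y + t + t) = y; rw [zm2_addK, e.symm_apply_apply]⟩⟩
    have := congrArg e hab
    rw [e.apply_symm_apply, e.apply_symm_apply] at this
    calc a = a + t + t := (zm2_addK _ t).symm
      _ = b + t + t := by rw [this]
      _ = b := zm2_addK _ t
  · show e.symm (A x + t) = x
    rw [hL, zm2_addK]
    exact e.symm_apply_apply x
  · show A (e.symm (y + t)) = y
    rw [hL]
    have : L (e.symm (y + t)) = y + t := e.apply_symm_apply (y + t)
    rw [this, zm2_addK]

lemma EAequiv_trans {n m : ℕ} {F G H : BV n → BV m} (h₁ : EAequiv F G) (h₂ : EAequiv G H) :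
    EAequiv F H := by
  obtain ⟨A₁, A₂, A₃, hA₁, hA₂, hA₂b, hA₃, hF⟩ := h₁
  obtain ⟨B₁, B₂, B₃, hB₁, hB₂, hB₂b, hB₃, hG⟩ := h₂
  refine ⟨A₁ ∘ₗ B₁, fun x => B₂ (A₂ x), fun x => A₁ (B₃ (A₂ x)) + A₃ x,
    hA₁.comp hB₁, hB₂.comp hA₂, hB₂b.comp hA₂b, ?_, fun x => ?_⟩
  · exact IsAffineF.add (((linear_isAffineF A₁).comp hB₃).comp hA₂) hA₃
  · rw [hF x, hG (A₂ x)]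
    simp only [LinearMap.comp_apply, map_add, add_assoc]

lemma EAequiv_symm {n m : ℕ} {F G : BV n → BV m} (h : EAequiv F G) : EAequiv G F := by
  obtain ⟨A₁, A₂, A₃, hA₁, hA₂, hA₂b, hA₃, hF⟩ := h
  obtain ⟨B, hB, hBb, hBA, hAB⟩ := affine_inv hA₂ hA₂b
  let e := LinearEquiv.ofBijective A₁ hA₁
  refine ⟨e.symm.toLinearMap, B, fun y => e.symm (A₃ (B y)), e.symm.bijective, hB, hBb,
    ((linear_isAffineF e.symm.toLinearMap).comp hA₃).comp hB, fun y => ?_⟩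
  have h1 : F (B y) = A₁ (G y) + A₃ (B y) := by rw [hF (B y), hAB y]
  have h2 : e.symm (F (B y)) = G y + e.symm (A₃ (B y)) := by
    rw [h1, map_add]
    congr 1
    exact e.symm_apply_apply (G y)
  calc G y = G y + e.symm (A₃ (B y)) + e.symm (A₃ (B y)) := (zm2_addK _ _).symm
    _ = _ := by rw [← h2]; rfl

end Aux
section Aux2

/-- Extend a linear automorphism of `𝔽₂ᵐ` to `𝔽₂^{m+1}` by identity on the last coordinate. -/
def extL {m : ℕ} (A : BV m →ₗ[ZMod 2] BV m) : BV (m + 1) →ₗ[ZMod 2] BV (m + 1) where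
  toFun v := Fin.snoc (A (Fin.init v)) (v (Fin.last m))
  map_add' u v := by
    have hinit : Fin.init (u + v) = Fin.init u + Fin.init v := rfl
    funext i
    refine Fin.lastCases ?_ (fun j => ?_) i
    · simp [Fin.snoc_last]
    · simp [Fin.snoc_castSucc, hinit, map_add]
  map_smul' c u := by
    have hinit : Fin.init (c • u) = c • Fin.init u := rfl
    funext i
    refine Fin.lastCases ?_ (fun j => ?_) i
    · simp [Fin.snoc_last]
    · simp [Fin.snoc_castSucc, hinit, map_smul]

lemma extL_apply {m : ℕ} (A : BV m →ₗ[ZMod 2] BV m) (v : BV (m + 1)) :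
    extL A v = Fin.snoc (A (Fin.init v)) (v (Fin.last m)) := rfl

lemma extL_bijective {m : ℕ} {A : BV m →ₗ[ZMod 2] BV m} (hA : Function.Bijective A) :
    Function.Bijective (extL A) := by
  let e := LinearEquiv.ofBijective A hA
  rw [Function.bijective_iff_has_inverse]
  refine ⟨fun v => Fin.snoc (e.symm (Fin.init v)) (v (Fin.last m)), fun v => ?_, fun v => ?_⟩
  · show Fin.snoc (e.symm (Fin.init (extL A v))) ((extL A v) (Fin.last m)) = v
    rw [extL_apply, Fin.init_snoc, Fin.snoc_last]
    have : e.symm (A (Fin.init v)) = Fin.init v := e.symm_apply_apply (Fin.init v)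
    rw [this, Fin.snoc_init_self]
  · show extL A (Fin.snoc (e.symm (Fin.init v)) (v (Fin.last m))) = v
    rw [extL_apply, Fin.init_snoc, Fin.snoc_last]
    have : A (e.symm (Fin.init v)) = Fin.init v := e.apply_symm_apply (Fin.init v)
    rw [this, Fin.snoc_init_self]

/-- Appending `0` as the last coordinate, as a linear map. -/
def sn0 {m : ℕ} : BV m →ₗ[ZMod 2] BV (m + 1) where
  toFun a := Fin.snoc a 0
  map_add' a b := by
    funext i
    refine Fin.lastCases ?_ (fun j => ?_) i
    · simp [Fin.snoc_last]
    · simp [Fin.snoc_castSucc]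
  map_smul' c a := by
    funext i
    refine Fin.lastCases ?_ (fun j => ?_) i
    · simp [Fin.snoc_last]
    · simp [Fin.snoc_castSucc]

/-- Placing a scalar in the last coordinate, as a linear map. -/
def pinL {m : ℕ} : ZMod 2 →ₗ[ZMod 2] BV (m + 1) where
  toFun c := Pi.single (Fin.last m) c
  map_add' a b := by simp [Pi.single_add]
  map_smul' c a := by
    funext j
    simp [Pi.single_apply, smul_eq_mul, mul_ite]

/-- Composing with the inner affine permutation. -/
lemma extend_comp {n m : ℕ} {F F' : BV n → BV m}
    (A₁ : BV m →ₗ[ZMod 2] BV m) (A₂ : BV n → BV n) (A₃ : BV n → BV m)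
    (hA₁ : Function.Bijective A₁) (hA₂ : IsAffineF A₂) (hA₂b : Function.Bijective A₂)
    (hA₃ : IsAffineF A₃) (hF : ∀ x, F x = A₁ (F' (A₂ x)) + A₃ x) (g : BV n → ZMod 2) :
    EAequiv (extendF F (fun x => g (A₂ x))) (extendF F' g) := by
  obtain ⟨L₃, t₃, h₃⟩ := hA₃
  refine ⟨extL A₁, A₂, fun x => Fin.snoc (A₃ x) 0, extL_bijective hA₁, hA₂, hA₂b,
    ⟨sn0 ∘ₗ L₃, sn0 t₃, fun x => by
      show (Fin.snoc (A₃ x) 0 : BV (m + 1)) = sn0 (L₃ x) + sn0 t₃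
      rw [← map_add, h₃ x]
      rfl⟩, fun x => ?_⟩
  show Fin.snoc (F x) (g (A₂ x)) =
    extL A₁ (Fin.snoc (F' (A₂ x)) (g (A₂ x))) + Fin.snoc (A₃ x) 0
  rw [extL_apply, Fin.init_snoc, Fin.snoc_last]
  funext i
  refine Fin.lastCases ?_ (fun j => ?_) i
  · simp [Fin.snoc_last]
  · simp only [Pi.add_apply, Fin.snoc_castSucc, hF x]

/-- Adding an affine scalar function to the extension coordinate preserves EA class. -/
lemma extend_add_affine {n m : ℕ} (F : BV n → BV m) (g ℓ : BV n → ZMod 2)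
    (hℓ : AffineScalar ℓ) :
    EAequiv (extendF F (fun x => g x + ℓ x)) (extendF F g) := by
  obtain ⟨L, t, hL⟩ := hℓ
  refine ⟨LinearMap.id, id, fun x => Pi.single (Fin.last m) (ℓ x),
    Function.bijective_id, ⟨LinearMap.id, 0, fun x => by simp⟩, Function.bijective_id,
    ⟨pinL ∘ₗ L, pinL t, fun x => by
      show Pi.single (Fin.last m) (ℓ x) = pinL (L x) + pinL t
      rw [← map_add, hL x]
      rfl⟩, fun x => ?_⟩
  show (Fin.snoc (F x) (g x + ℓ x) : BV (m + 1)) =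
    LinearMap.id (Fin.snoc (F x) (g x) : BV (m + 1)) + Pi.single (Fin.last m) (ℓ x)
  rw [LinearMap.id_coe, id_eq]
  funext i
  refine Fin.lastCases ?_ (fun j => ?_) i
  · simp [Fin.snoc_last]
  · have hne : (Fin.castSucc j) ≠ Fin.last m := (Fin.castSucc_lt_last j).ne
    simp [Fin.snoc_castSucc, Pi.single_eq_of_ne hne]

end Aux2
section Aux3

/-- The affine part removed from `h` to make it affine-free. -/
def ellh {n : ℕ} (h : BV n → ZMod 2) (x : BV n) : ZMod 2 :=
  h 0 + ∑ i, (h (Pi.single i 1) + h 0) * x i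

/-- Affine-free normalization of a Boolean function. -/
def AFnorm {n : ℕ} (h : BV n → ZMod 2) (x : BV n) : ZMod 2 := h x + ellh h x

lemma ellh_affineScalar {n : ℕ} (h : BV n → ZMod 2) : AffineScalar (ellh h) := by
  refine ⟨∑ i, (h (Pi.single i 1) + h 0) • LinearMap.proj i, h 0, fun x => ?_⟩
  rw [ellh, LinearMap.sum_apply]
  simp only [LinearMap.smul_apply, LinearMap.proj_apply, smul_eq_mul]
  rw [add_comm]

lemma affineScalar_add {n : ℕ} {a b : BV n → ZMod 2} (ha : AffineScalar a)
    (hb : AffineScalar b) : AffineScalar (fun x => a x + b x) := by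
  obtain ⟨L₁, t₁, h₁⟩ := ha
  obtain ⟨L₂, t₂, h₂⟩ := hb
  refine ⟨L₁ + L₂, t₁ + t₂, fun x => ?_⟩
  simp only [h₁, h₂, LinearMap.add_apply]
  abel

lemma affineScalar_comp {n : ℕ} {ℓ : BV n → ZMod 2} {A : BV n → BV n}
    (hℓ : AffineScalar ℓ) (hA : IsAffineF A) : AffineScalar (fun x => ℓ (A x)) := by
  obtain ⟨L₁, t₁, h₁⟩ := hℓ
  obtain ⟨L₂, t₂, h₂⟩ := hA
  exact ⟨L₁ ∘ₗ L₂, L₁ t₂ + t₁, fun x => by simp [h₁, h₂, map_add, add_assoc]⟩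

lemma AFnorm_affineFree {n : ℕ} (h : BV n → ZMod 2) : AffineFree (AFnorm h) := by
  constructor
  · simp [AFnorm, ellh, zm2_add_self]
  · intro j
    have hsum : ∑ i, (h (Pi.single i 1) + h 0) * (Pi.single j 1 : BV n) i
        = h (Pi.single j 1) + h 0 := by
      rw [Finset.sum_eq_single j]
      · simp
      · intro i _ hij
        rw [Pi.single_apply, if_neg hij, mul_zero]
      · simp
    rw [AFnorm, ellh, hsum]
    have : ∀ a b : ZMod 2, a + (b + (a + b)) = 0 := by decide
    exact this _ _

lemma affineFree_scalar_eq_zero {n : ℕ} {d : BV n → ZMod 2} (hf : AffineFree d)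
    (hs : AffineScalar d) : ∀ x, d x = 0 := by
  obtain ⟨L, t, hd⟩ := hs
  have ht : t = 0 := by
    have := hf.1
    rw [hd 0, map_zero, zero_add] at this
    exact this
  have hLi : ∀ i : Fin n, L (Pi.single i 1) = 0 := by
    intro i
    have := hf.2 i
    rw [hd, ht, add_zero] at this
    exact this
  intro x
  rw [hd, ht, add_zero]
  rw [LinearMap.pi_apply_eq_sum_univ]
  refine Finset.sum_eq_zero fun i _ => ?_
  have : (fun j => if i = j then (1 : ZMod 2) else 0) = Pi.single i 1 := by
    funext j
    rw [Pi.single_apply]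
    simp [eq_comm]
  rw [this, hLi i, smul_zero]

lemma friends_inj {n m : ℕ} {F F' : BV n → BV m} (h : EAequiv F F') (G : BV n → BV (m + 1)) :
    ∃ Φ : {f : BV n → ZMod 2 // AffineFree f ∧ EAequiv (extendF F' f) G} →
        {f : BV n → ZMod 2 // AffineFree f ∧ EAequiv (extendF F f) G},
      Function.Injective Φ := by
  obtain ⟨A₁, A₂, A₃, hA₁, hA₂, hA₂b, hA₃, hF⟩ := h
  obtain ⟨B, hB, hBb, hBA, hAB⟩ := affine_inv hA₂ hA₂b
  refine ⟨fun f => ⟨AFnorm (fun x => f.1 (A₂ x)), AFnorm_affineFree _, ?_⟩, ?_⟩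
  · have e1 : EAequiv (extendF F (AFnorm (fun x => f.1 (A₂ x))))
        (extendF F (fun x => f.1 (A₂ x))) :=
      extend_add_affine F _ _ (ellh_affineScalar _)
    have e2 : EAequiv (extendF F (fun x => f.1 (A₂ x))) (extendF F' f.1) :=
      extend_comp A₁ A₂ A₃ hA₁ hA₂ hA₂b hA₃ hF f.1
    exact EAequiv_trans e1 (EAequiv_trans e2 f.2.2)
  · intro f₁ f₂ heq
    have heq' : ∀ x, AFnorm (fun x => f₁.1 (A₂ x)) x = AFnorm (fun x => f₂.1 (A₂ x)) x :=
      fun x => congrFun (congrArg Subtype.val heq) x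
    set d : BV n → ZMod 2 := fun y => f₁.1 y + f₂.1 y with hdd
    have key : ∀ y, d y = ellh (fun x => f₁.1 (A₂ x)) (B y) + ellh (fun x => f₂.1 (A₂ x)) (B y) := by
      intro y
      have := heq' (B y)
      rw [AFnorm, AFnorm, hAB y] at this
      have swap : ∀ a b c e : ZMod 2, a + b = c + e → a + c = b + e := by decide
      exact swap _ _ _ _ this
    have hscalar : AffineScalar d := by
      have : AffineScalar (fun y => ellh (fun x => f₁.1 (A₂ x)) (B y)
          + ellh (fun x => f₂.1 (A₂ x)) (B y)) :=
        affineScalar_add (affineScalar_comp (ellh_affineScalar _) hB)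
          (affineScalar_comp (ellh_affineScalar _) hB)
      obtain ⟨L, t, hL⟩ := this
      exact ⟨L, t, fun y => by rw [key y]; exact hL y⟩
    have hfree : AffineFree d := by
      refine ⟨?_, fun i => ?_⟩
      · rw [hdd]; simp only; rw [f₁.2.1.1, f₂.2.1.1, add_zero]
      · rw [hdd]; simp only; rw [f₁.2.1.2 i, f₂.2.1.2 i, add_zero]
    have hzero := affineFree_scalar_eq_zero hfree hscalar
    apply Subtype.ext
    funext y
    have := hzero y
    rw [hdd] at this
    have cancel : ∀ a b : ZMod 2, a + b = 0 → a = b := by decide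
    exact cancel _ _ this

end Aux3

/-- If `F, F'` are EA-equivalent `(n,m)`-bent functions and `G` is an `(n,m+1)`-bent
function, then `F` and `F'` have the same number of affine-free bent friends leading to
the equivalence class of `G`. -/
theorem card_bent_friends_invariant
    {n m : ℕ} (hev : Even n) (hm : 1 ≤ m)
    (F F' : BV n → BV m) (hF : IsBent F) (hF' : IsBent F') (hFF' : EAequiv F F')
    (G : BV n → BV (m + 1)) (hG : IsBent G) :
    Nat.card {f : BV n → ZMod 2 // AffineFree f ∧ EAequiv (extendF F f) G} =
      Nat.card {f : BV n → ZMod 2 // AffineFree f ∧ EAequiv (extendF F' f) G} := by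
  obtain ⟨Φ, hΦ⟩ := friends_inj hFF' G
  obtain ⟨Ψ, hΨ⟩ := friends_inj (EAequiv_symm hFF') G
  obtain ⟨e⟩ := Function.Embedding.antisymm ⟨Ψ, hΨ⟩ ⟨Φ, hΦ⟩
  exact Nat.card_congr e
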